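/- For every ℓ ∈ ℕ and all ζ, x ∈ ℝ, ∑_{j=0}^ℓ binom(ℓ,j) (−ζ)^j (1+ζ)^{ℓ−j} L_{ℓ−j}(x) = L_ℓ((1+ζ) x). -/

import Mathlib

/-- The Laguerre polynomial `L_n(x) = ∑ₖ₌₀ⁿ (-1)^k (n choose k) x^k / k!`. -/
noncomputable def laguerre (n : ℕ) (x : ℝ) : ℝ :=
  ∑ k ∈ Finset.range (n + 1), (-1) ^ k * (n.choose k : ℝ) * x ^ k / (k.factorial : ℝ)

lemma choose_swap {ℓ j k : ℕ} (h : j + k ≤ ℓ) :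
    ℓ.choose j * (ℓ - j).choose k = ℓ.choose k * (ℓ - k).choose j := by
  have h1 := Nat.choose_mul (k := j + k) (n := ℓ) (s := j) (Nat.le_add_right _ _)
  have h2 := Nat.choose_mul (k := j + k) (n := ℓ) (s := k) (Nat.le_add_left _ _)
  have h3 : (j + k).choose j = (j + k).choose k := by
    rw [← Nat.choose_symm (Nat.le_add_left _ _)]
    congr 1
    omega
  simp only [Nat.add_sub_cancel_left, Nat.add_sub_cancel] at h1 h2
  rw [h3, h2] at h1
  linarith [h1]

lemma vandermonde_one (m : ℕ) (ζ : ℝ) :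
    ∑ j ∈ Finset.range (m + 1), (m.choose j : ℝ) * (-ζ) ^ j * (1 + ζ) ^ (m - j) = 1 := by
  calc ∑ j ∈ Finset.range (m + 1), (m.choose j : ℝ) * (-ζ) ^ j * (1 + ζ) ^ (m - j)
      = ∑ j ∈ Finset.range (m + 1), (-ζ) ^ j * (1 + ζ) ^ (m - j) * (m.choose j : ℝ) := by
        apply Finset.sum_congr rfl; intro j _; ring
    _ = (-ζ + (1 + ζ)) ^ m := (add_pow _ _ _).symm
    _ = 1 := by norm_num

/-- `∑_{j=0}^ℓ binom(ℓ,j) (−ζ)^j (1+ζ)^{ℓ−j} L_{ℓ−j}(x) = L_ℓ((1+ζ) x)`. -/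
theorem sum_laguerre_scaling (ℓ : ℕ) (ζ x : ℝ) :
    ∑ j ∈ Finset.range (ℓ + 1),
        (ℓ.choose j : ℝ) * (-ζ) ^ j * (1 + ζ) ^ (ℓ - j) * laguerre (ℓ - j) x =
      laguerre ℓ ((1 + ζ) * x) := by
  simp only [laguerre, Finset.mul_sum]
  rw [Finset.sum_comm' (s := Finset.range (ℓ + 1)) (t := fun j => Finset.range (ℓ - j + 1))
      (t' := Finset.range (ℓ + 1)) (s' := fun k => Finset.range (ℓ - k + 1))
      (by intro a b; simp only [Finset.mem_range]; omega)]
  apply Finset.sum_congr rfl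
  intro k hk
  rw [Finset.mem_range] at hk
  have hkℓ : k ≤ ℓ := by omega
  have key : ∀ j ∈ Finset.range (ℓ - k + 1),
      (ℓ.choose j : ℝ) * (-ζ) ^ j * (1 + ζ) ^ (ℓ - j) *
          ((-1) ^ k * ((ℓ - j).choose k : ℝ) * x ^ k / (k.factorial : ℝ)) =
        ((-1) ^ k * (ℓ.choose k : ℝ) * ((1 + ζ) * x) ^ k / (k.factorial : ℝ)) *
          (((ℓ - k).choose j : ℝ) * (-ζ) ^ j * (1 + ζ) ^ (ℓ - k - j)) := by
    intro j hj
    rw [Finset.mem_range] at hj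
    have hjk : j + k ≤ ℓ := by omega
    have hc : (ℓ.choose j : ℝ) * ((ℓ - j).choose k : ℝ) =
        (ℓ.choose k : ℝ) * ((ℓ - k).choose j : ℝ) := by
      exact_mod_cast congrArg (Nat.cast : ℕ → ℝ) (choose_swap hjk)
    have hpow : (1 + ζ) ^ (ℓ - j) = (1 + ζ) ^ k * (1 + ζ) ^ (ℓ - k - j) := by
      rw [← pow_add]; congr 1; omega
    rw [hpow, mul_pow]
    linear_combination (((-1 : ℝ)) ^ k * x ^ k * (-ζ) ^ j * ((1 + ζ) ^ k * (1 + ζ) ^ (ℓ - k - j))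
      / (k.factorial : ℝ)) * hc
  rw [Finset.sum_congr rfl key, ← Finset.mul_sum, vandermonde_one (ℓ - k) ζ, mul_one]
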